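/- Let A be a nonempty finite family of pairwise vertex-disjoint graphs, each member of which is isomorphic to A_k for some integer k >= 2, and let G be the complete join of all members of A (every vertex of each member is adjacent to every vertex of every other member). Then gamma_L(G) = |V(G)|/2. -/

import Mathlib

/-- `D` is a dominating set of `G`: every vertex not in `D` has a neighbor in `D`. -/
def IsDominatingSet {V : Type*} (G : SimpleGraph V) (D : Set V) : Prop :=
  ∀ v ∉ D, ∃ u ∈ D, G.Adj u v

/-- `D` is a locating-dominating set of `G`: a dominating set such that any two distinct
vertices outside `D` have distinct neighborhoods within `D`. -/
def IsLocatingDominatingSet {V : Type*} (G : SimpleGraph V) (D : Set V) : Prop :=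
  IsDominatingSet G D ∧
    ∀ u ∉ D, ∀ v ∉ D, u ≠ v →
      {w | w ∈ D ∧ G.Adj u w} ≠ {w | w ∈ D ∧ G.Adj v w}

/-- The location-domination number `γ_L(G)`: minimum cardinality of a
locating-dominating set of `G`. -/
noncomputable def locDomNumber {V : Type*} [Fintype V] (G : SimpleGraph V) : ℕ :=
  sInf {n : ℕ | ∃ D : Set V, IsLocatingDominatingSet G D ∧ D.ncard = n}

/-- The graph `A_k` on vertices `x_1, …, x_{2k}` (here `Fin (2*k)`, with `x_i`
corresponding to the element of value `i - 1`) in which two distinct vertices `x_i`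
and `x_j` are adjacent if and only if `|i - j| ≤ k - 1`. -/
def Agraph (k : ℕ) : SimpleGraph (Fin (2 * k)) where
  Adj i j := i ≠ j ∧ (i : ℕ) ≤ (j : ℕ) + (k - 1) ∧ (j : ℕ) ≤ (i : ℕ) + (k - 1)
  symm := ⟨fun i j h => ⟨h.1.symm, h.2.2, h.2.1⟩⟩
  loopless := ⟨fun i h => h.1 rfl⟩

/-- The complete join of a family of pairwise vertex-disjoint graphs `H i`: their disjoint
union together with all edges between vertices lying in different members. -/
def CompleteJoinFamily {ι : Type*} {V : ι → Type*} (H : ∀ i, SimpleGraph (V i)) :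
    SimpleGraph (Σ i, V i) where
  Adj x y := x ≠ y ∧ ∀ h : x.1 = y.1, (H y.1).Adj (h ▸ x.2) y.2
  symm := by
    refine ⟨?_⟩
    rintro ⟨i, a⟩ ⟨j, b⟩ ⟨hne, hadj⟩
    refine ⟨hne.symm, ?_⟩
    intro h
    dsimp only at h hadj ⊢
    cases h
    exact (hadj rfl).symm
  loopless := ⟨fun x h => h.1 rfl⟩

section Aux

variable {ι : Type*} {V : ι → Type*}

lemma completeJoin_adj_same {H : ∀ i, SimpleGraph (V i)} {i : ι} {a b : V i} :
    (CompleteJoinFamily H).Adj ⟨i, a⟩ ⟨i, b⟩ ↔ (H i).Adj a b := by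
  constructor
  · rintro ⟨_, h⟩; exact h rfl
  · intro h
    refine ⟨fun he => ?_, fun h' => h⟩
    rw [Sigma.mk.inj_iff] at he
    exact (H i).loopless.irrefl a ((eq_of_heq he.2) ▸ h)

lemma completeJoin_adj_ne {H : ∀ i, SimpleGraph (V i)} {i j : ι} (hij : i ≠ j)
    (a : V i) (b : V j) : (CompleteJoinFamily H).Adj ⟨i, a⟩ ⟨j, b⟩ := by
  refine ⟨fun he => hij (congrArg Sigma.fst he), fun h' => absurd h' hij⟩

lemma agraph_adj {k : ℕ} {a b : Fin (2 * k)} :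
    (Agraph k).Adj a b ↔
      (a : ℕ) ≠ (b : ℕ) ∧ (a : ℕ) ≤ (b : ℕ) + (k - 1) ∧ (b : ℕ) ≤ (a : ℕ) + (k - 1) := by
  constructor
  · rintro ⟨h1, h2⟩; exact ⟨fun hv => h1 (Fin.ext hv), h2⟩
  · rintro ⟨h1, h2⟩; exact ⟨fun he => h1 (congrArg Fin.val he), h2⟩

end Aux

section Iso

variable {α β : Type*} {G : SimpleGraph α} {G' : SimpleGraph β}

lemma isLD_image (φ : G ≃g G') {D : Set α} (h : IsLocatingDominatingSet G D) :
    IsLocatingDominatingSet G' (φ '' D) := by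
  obtain ⟨hdom, hloc⟩ := h
  constructor
  · intro v hv
    have hv' : φ.symm v ∉ D := fun hx => hv ⟨_, hx, by simp⟩
    obtain ⟨u, hu, hadj⟩ := hdom _ hv'
    refine ⟨φ u, ⟨u, hu, rfl⟩, ?_⟩
    have := φ.map_adj_iff.mpr hadj
    simpa using this
  · intro u hu v hv huv heq
    apply hloc (φ.symm u) (fun hx => hu ⟨_, hx, by simp⟩) (φ.symm v)
      (fun hx => hv ⟨_, hx, by simp⟩)
      (fun h => huv (by simpa using congrArg φ h))
    have key : ∀ x : β, {w | w ∈ D ∧ G.Adj (φ.symm x) w} =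
        φ ⁻¹' {w | w ∈ φ '' D ∧ G'.Adj x w} := by
      intro x
      ext w
      simp only [Set.mem_setOf_eq, Set.mem_preimage]
      constructor
      · rintro ⟨hd, ha⟩
        refine ⟨⟨w, hd, rfl⟩, ?_⟩
        have := φ.map_adj_iff.mpr ha
        simpa using this
      · rintro ⟨hd, ha⟩
        refine ⟨(Function.Injective.mem_set_image φ.injective).1 hd, ?_⟩
        have := φ.symm.map_adj_iff.mpr ha
        simpa using this
    rw [key u, key v, heq]

lemma locDomNumber_congr [Fintype α] [Fintype β] (φ : G ≃g G') :
    locDomNumber G = locDomNumber G' := by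
  unfold locDomNumber
  congr 1
  ext n
  constructor
  · rintro ⟨D, hD, rfl⟩
    exact ⟨φ '' D, isLD_image φ hD, Set.ncard_image_of_injective D φ.injective⟩
  · rintro ⟨D, hD, rfl⟩
    exact ⟨φ.symm '' D, isLD_image φ.symm hD, Set.ncard_image_of_injective D φ.symm.injective⟩

end Iso

section JoinIso

variable {ι : Type*} {V : ι → Type*} {V' : ι → Type*}

def joinIso {H : ∀ i, SimpleGraph (V i)} {H' : ∀ i, SimpleGraph (V' i)}
    (e : ∀ i, H i ≃g H' i) : CompleteJoinFamily H ≃g CompleteJoinFamily H' where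
  toEquiv := Equiv.sigmaCongrRight fun i => (e i).toEquiv
  map_rel_iff' := by
    rintro ⟨i, a⟩ ⟨j, b⟩
    by_cases hij : i = j
    · subst hij
      show (CompleteJoinFamily H').Adj ⟨i, e i a⟩ ⟨i, e i b⟩ ↔ _
      rw [completeJoin_adj_same, completeJoin_adj_same, (e i).map_adj_iff]
    · constructor
      · intro _; exact completeJoin_adj_ne hij a b
      · intro _; exact completeJoin_adj_ne hij ((e i) a) ((e j) b)

end JoinIso

section Lower

variable {ι : Type*}

/-- Values of vertices of `D` in component `i` that are non-adjacent to the vertex `a`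
of that component. -/
def traceSet (k : ι → ℕ) (D : Set ((i : ι) × Fin (2 * k i))) (i : ι) (a : Fin (2 * k i)) :
    Set ℕ :=
  {n | ∃ b : Fin (2 * k i), (b : ℕ) = n ∧ (⟨i, b⟩ : (i : ι) × Fin (2 * k i)) ∈ D ∧
    (n + k i ≤ (a : ℕ) ∨ (a : ℕ) + k i ≤ n)}

noncomputable def pick (k : ι → ℕ) (hk : ∀ i, 2 ≤ k i) (D : Set ((i : ι) × Fin (2 * k i)))
    (u : (i : ι) × Fin (2 * k i)) : (i : ι) × Fin (2 * k i) :=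
  ⟨u.1, ⟨(if (u.2 : ℕ) < k u.1 then sInf (traceSet k D u.1 u.2)
      else sSup (traceSet k D u.1 u.2)) % (2 * k u.1),
    Nat.mod_lt _ (by have := hk u.1; omega)⟩⟩

lemma lower [Fintype ι] (k : ι → ℕ) (hk : ∀ i, 2 ≤ k i)
    (D : Set ((i : ι) × Fin (2 * k i)))
    (hD : IsLocatingDominatingSet (CompleteJoinFamily fun i => Agraph (k i)) D) :
    Fintype.card ((i : ι) × Fin (2 * k i)) ≤ 2 * D.ncard := by
  classical
  -- non-adjacency in terms of arithmetic
  have key : ∀ (i : ι) (a b : Fin (2 * k i)),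
      (⟨i, a⟩ : (i : ι) × Fin (2 * k i)) ∉ D → (⟨i, b⟩ : (i : ι) × Fin (2 * k i)) ∈ D →
      ((Agraph (k i)).Adj a b ↔
        ¬((b : ℕ) + k i ≤ (a : ℕ) ∨ (a : ℕ) + k i ≤ (b : ℕ))) := by
    intro i a b haD hbD
    have hab : (a : ℕ) ≠ (b : ℕ) := fun h => haD ((Fin.ext h : a = b) ▸ hbD)
    rw [agraph_adj]
    have h2 := hk i; have ha := a.isLt; have hb := b.isLt
    constructor
    · rintro ⟨-, h⟩; omega
    · intro h; exact ⟨hab, by omega, by omega⟩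
  -- vertices with empty trace have full `D`-neighborhood
  have nbr_empty : ∀ u, u ∉ D → traceSet k D u.1 u.2 = ∅ →
      {w | w ∈ D ∧ (CompleteJoinFamily fun i => Agraph (k i)).Adj u w} = D := by
    rintro ⟨i, a⟩ hu hS
    have hS' : traceSet k D i a = ∅ := hS
    ext w
    simp only [Set.mem_setOf_eq]
    refine ⟨fun h => h.1, fun hw => ⟨hw, ?_⟩⟩
    obtain ⟨j, c⟩ := w
    by_cases hij : i = j
    · subst hij
      rw [completeJoin_adj_same, key i a c hu hw]
      intro hfar
      have hc : (c : ℕ) ∉ traceSet k D i a := by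
        rw [hS']; exact Set.notMem_empty _
      exact hc ⟨c, rfl, hw, hfar⟩
    · exact completeJoin_adj_ne (H := fun i => Agraph (k i)) hij a c
  -- trace inclusion implies neighborhood inclusion
  have nbr_mono : ∀ (i : ι) (a b : Fin (2 * k i)),
      (⟨i, a⟩ : (i : ι) × Fin (2 * k i)) ∉ D → (⟨i, b⟩ : (i : ι) × Fin (2 * k i)) ∉ D →
      (∀ c : Fin (2 * k i), (⟨i, c⟩ : (i : ι) × Fin (2 * k i)) ∈ D →
        ((c : ℕ) + k i ≤ (b : ℕ) ∨ (b : ℕ) + k i ≤ (c : ℕ)) →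
        ((c : ℕ) + k i ≤ (a : ℕ) ∨ (a : ℕ) + k i ≤ (c : ℕ))) →
      {w | w ∈ D ∧ (CompleteJoinFamily fun i => Agraph (k i)).Adj ⟨i, a⟩ w} ⊆
        {w | w ∈ D ∧ (CompleteJoinFamily fun i => Agraph (k i)).Adj ⟨i, b⟩ w} := by
    intro i a b haD hbD htr
    rintro ⟨j, c⟩ ⟨hcD, hadj⟩
    refine ⟨hcD, ?_⟩
    by_cases hij : i = j
    · subst hij
      rw [completeJoin_adj_same] at hadj ⊢
      rw [key i a c haD hcD] at hadj
      rw [key i b c hbD hcD]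
      exact fun hfb => hadj (htr c hcD hfb)
    · exact completeJoin_adj_ne (H := fun i => Agraph (k i)) hij b c
  -- the chosen element of a nonempty trace
  have hBdd : ∀ (i : ι) (a : Fin (2 * k i)), BddAbove (traceSet k D i a) :=
    fun i a => ⟨2 * k i, by rintro n ⟨b, rfl, -, -⟩; exact b.isLt.le⟩
  have choice_mem : ∀ (i : ι) (a : Fin (2 * k i)), (traceSet k D i a).Nonempty →
      (if (a : ℕ) < k i then sInf (traceSet k D i a) else sSup (traceSet k D i a)) ∈
        traceSet k D i a := by
    intro i a hne
    split
    · exact Nat.sInf_mem hne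
    · exact Nat.sSup_mem hne (hBdd i a)
  have pick_val_eq : ∀ (i : ι) (a : Fin (2 * k i)), (traceSet k D i a).Nonempty →
      ((pick k hk D ⟨i, a⟩).2 : ℕ) =
        (if (a : ℕ) < k i then sInf (traceSet k D i a) else sSup (traceSet k D i a)) := by
    intro i a hne
    obtain ⟨b, hbv, -, -⟩ := choice_mem i a hne
    have hrfl : ((pick k hk D ⟨i, a⟩).2 : ℕ) =
        (if (a : ℕ) < k i then sInf (traceSet k D i a) else sSup (traceSet k D i a)) %
          (2 * k i) := rfl
    rw [hrfl, ← hbv, Nat.mod_eq_of_lt b.isLt]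
  have hmaps : ∀ u ∈ {u : (i : ι) × Fin (2 * k i) | u ∉ D ∧ (traceSet k D u.1 u.2).Nonempty},
      pick k hk D u ∈ D := by
    rintro ⟨i, a⟩ ⟨-, hne⟩
    have hne' : (traceSet k D i a).Nonempty := hne
    obtain ⟨b, hbv, hbD, -⟩ := choice_mem i a hne'
    have h2 : (pick k hk D ⟨i, a⟩).2 = b := by
      apply Fin.ext
      rw [pick_val_eq i a hne', ← hbv]
    have heq : pick k hk D ⟨i, a⟩ = ⟨i, b⟩ := by
      calc pick k hk D ⟨i, a⟩ = ⟨i, (pick k hk D ⟨i, a⟩).2⟩ := rfl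
        _ = ⟨i, b⟩ := by rw [h2]
    rw [heq]; exact hbD
  -- injectivity
  have hinj : Set.InjOn (pick k hk D)
      {u : (i : ι) × Fin (2 * k i) | u ∉ D ∧ (traceSet k D u.1 u.2).Nonempty} := by
    rintro ⟨i, a⟩ ⟨haD, hane⟩ ⟨j, b⟩ ⟨hbD, hbne⟩ heq
    have hane' : (traceSet k D i a).Nonempty := hane
    have hbne' : (traceSet k D j b).Nonempty := hbne
    have hij : i = j := congrArg Sigma.fst heq
    subst hij
    by_contra hne
    have hab : (a : ℕ) ≠ (b : ℕ) := fun h => hne (by rw [(Fin.ext h : a = b)])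
    have hvals : ((pick k hk D ⟨i, a⟩).2 : ℕ) = ((pick k hk D ⟨i, b⟩).2 : ℕ) :=
      congrArg (fun w : (i : ι) × Fin (2 * k i) => (w.2 : ℕ)) heq
    rw [pick_val_eq i a hane', pick_val_eq i b hbne'] at hvals
    have hma := choice_mem i a hane'
    have hmb := choice_mem i b hbne'
    rw [hvals] at hma
    set m := if (b : ℕ) < k i then sInf (traceSet k D i b) else sSup (traceSet k D i b)
      with hmdef
    obtain ⟨ea, heav, heaD, heafar⟩ := hma
    obtain ⟨eb, hebv, hebD, hebfar⟩ := hmb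
    have hm2k : m < 2 * k i := hebv ▸ eb.isLt
    have hk2 := hk i
    have hia := a.isLt; have hib := b.isLt
    -- contradiction via equal neighborhoods
    apply hD.2 ⟨i, a⟩ haD ⟨i, b⟩ hbD hne
    apply Set.Subset.antisymm
    · apply nbr_mono i a b haD hbD
      intro c hcD hfb
      rcases Nat.lt_or_ge (a : ℕ) (k i) with hA | hA <;>
        rcases Nat.lt_or_ge (b : ℕ) (k i) with hB | hB
      · -- both small: m = sInf of both
        have hAm : (a : ℕ) + k i ≤ m := by rcases heafar with h | h <;> omega
        have hcm : (b : ℕ) + k i ≤ (c : ℕ) := by rcases hfb with h | h <;> omega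
        have hcSB : (c : ℕ) ∈ traceSet k D i b := ⟨c, rfl, hcD, Or.inr hcm⟩
        have hmc : m ≤ (c : ℕ) := by
          rw [hmdef, if_pos hB]
          exact Nat.sInf_le hcSB
        exact Or.inr (by omega)
      · exfalso
        rcases heafar with h | h <;> rcases hebfar with h' | h' <;> omega
      · exfalso
        rcases heafar with h | h <;> rcases hebfar with h' | h' <;> omega
      · -- both large: m = sSup of both
        have hAm : m + k i ≤ (a : ℕ) := by rcases heafar with h | h <;> omega
        have hcm : (c : ℕ) + k i ≤ (b : ℕ) := by rcases hfb with h | h <;> omega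
        have hcSB : (c : ℕ) ∈ traceSet k D i b := ⟨c, rfl, hcD, Or.inl hcm⟩
        have hmc : (c : ℕ) ≤ m := by
          rw [hmdef, if_neg (by omega)]
          exact le_csSup (hBdd i b) hcSB
        exact Or.inl (by omega)
    · apply nbr_mono i b a hbD haD
      intro c hcD hfa
      rcases Nat.lt_or_ge (a : ℕ) (k i) with hA | hA <;>
        rcases Nat.lt_or_ge (b : ℕ) (k i) with hB | hB
      · have hBm : (b : ℕ) + k i ≤ m := by rcases hebfar with h | h <;> omega
        have hcm : (a : ℕ) + k i ≤ (c : ℕ) := by rcases hfa with h | h <;> omega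
        have hcSA : (c : ℕ) ∈ traceSet k D i a := ⟨c, rfl, hcD, Or.inr hcm⟩
        have hme : m = sInf (traceSet k D i a) := by rw [← hvals, if_pos hA]
        have hmc : m ≤ (c : ℕ) := by rw [hme]; exact Nat.sInf_le hcSA
        exact Or.inr (by omega)
      · exfalso
        rcases heafar with h | h <;> rcases hebfar with h' | h' <;> omega
      · exfalso
        rcases heafar with h | h <;> rcases hebfar with h' | h' <;> omega
      · have hBm : m + k i ≤ (b : ℕ) := by rcases hebfar with h | h <;> omega
        have hcm : (c : ℕ) + k i ≤ (a : ℕ) := by rcases hfa with h | h <;> omega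
        have hcSA : (c : ℕ) ∈ traceSet k D i a := ⟨c, rfl, hcD, Or.inl hcm⟩
        have hme : m = sSup (traceSet k D i a) := by rw [← hvals, if_neg (by omega)]
        have hmc : (c : ℕ) ≤ m := by rw [hme]; exact le_csSup (hBdd i a) hcSA
        exact Or.inl (by omega)
  -- at most one vertex with empty trace
  have hE1 : {u : (i : ι) × Fin (2 * k i) |
      u ∉ D ∧ ¬(traceSet k D u.1 u.2).Nonempty}.ncard ≤ 1 := by
    rw [Set.ncard_le_one_iff]
    rintro u v ⟨huD, hus⟩ ⟨hvD, hvs⟩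
    by_contra hne
    apply hD.2 u huD v hvD hne
    rw [nbr_empty u huD (Set.not_nonempty_iff_eq_empty.1 hus),
        nbr_empty v hvD (Set.not_nonempty_iff_eq_empty.1 hvs)]
  -- counting
  have hcompl : Dᶜ.ncard ≤
      {u : (i : ι) × Fin (2 * k i) | u ∉ D ∧ ¬(traceSet k D u.1 u.2).Nonempty}.ncard +
      {u : (i : ι) × Fin (2 * k i) | u ∉ D ∧ (traceSet k D u.1 u.2).Nonempty}.ncard := by
    have hsub : Dᶜ ⊆
        {u : (i : ι) × Fin (2 * k i) | u ∉ D ∧ ¬(traceSet k D u.1 u.2).Nonempty} ∪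
        {u : (i : ι) × Fin (2 * k i) | u ∉ D ∧ (traceSet k D u.1 u.2).Nonempty} := by
      intro u hu
      by_cases h : (traceSet k D u.1 u.2).Nonempty
      · exact Or.inr ⟨hu, h⟩
      · exact Or.inl ⟨hu, h⟩
    calc Dᶜ.ncard ≤ _ := Set.ncard_le_ncard hsub (Set.toFinite _)
      _ ≤ _ := Set.ncard_union_le _ _
  have hAD : {u : (i : ι) × Fin (2 * k i) |
      u ∉ D ∧ (traceSet k D u.1 u.2).Nonempty}.ncard ≤ D.ncard :=
    Set.ncard_le_ncard_of_injOn _ hmaps hinj (Set.toFinite _)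
  have htot : D.ncard + Dᶜ.ncard = Fintype.card ((i : ι) × Fin (2 * k i)) := by
    rw [Set.ncard_add_ncard_compl]; exact Nat.card_eq_fintype_card
  have hcard : Fintype.card ((i : ι) × Fin (2 * k i)) = 2 * ∑ i, k i := by
    simp [Fintype.card_sigma, Finset.mul_sum]
  omega

end Lower

section Upper

variable {ι : Type*}

lemma upperLD (k : ι → ℕ) (hk : ∀ i, 2 ≤ k i) :
    IsLocatingDominatingSet (CompleteJoinFamily fun i => Agraph (k i))
      {u : (i : ι) × Fin (2 * k i) | 1 ≤ (u.2 : ℕ) ∧ (u.2 : ℕ) ≤ k u.1} := by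
  constructor
  · -- dominating
    rintro ⟨i, a⟩ ha
    have ha' : ¬(1 ≤ (a : ℕ) ∧ (a : ℕ) ≤ k i) := ha
    have hk2 := hk i; have hia := a.isLt
    by_cases h0 : (a : ℕ) = 0
    · refine ⟨⟨i, ⟨1, by omega⟩⟩, ⟨by simp, by simp; omega⟩, ?_⟩
      refine completeJoin_adj_same.2 (agraph_adj.2 ?_)
      simp only [Fin.val_mk]
      omega
    · refine ⟨⟨i, ⟨k i, by omega⟩⟩, ⟨by simp; omega, by simp⟩, ?_⟩
      refine completeJoin_adj_same.2 (agraph_adj.2 ?_)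
      simp only [Fin.val_mk]
      omega
  · -- locating
    have same : ∀ (i : ι) (a b : Fin (2 * k i)), (a : ℕ) < (b : ℕ) →
        ¬(1 ≤ (a : ℕ) ∧ (a : ℕ) ≤ k i) → ¬(1 ≤ (b : ℕ) ∧ (b : ℕ) ≤ k i) →
        {w | w ∈ {u : (i : ι) × Fin (2 * k i) | 1 ≤ (u.2 : ℕ) ∧ (u.2 : ℕ) ≤ k u.1} ∧
            (CompleteJoinFamily fun i => Agraph (k i)).Adj ⟨i, a⟩ w} ≠
          {w | w ∈ {u : (i : ι) × Fin (2 * k i) | 1 ≤ (u.2 : ℕ) ∧ (u.2 : ℕ) ≤ k u.1} ∧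
            (CompleteJoinFamily fun i => Agraph (k i)).Adj ⟨i, b⟩ w} := by
      intro i a b hab ha hb heq
      have hk2 := hk i; have hia := a.isLt; have hib := b.isLt
      have hbk : k i + 1 ≤ (b : ℕ) := by omega
      by_cases h0 : (a : ℕ) = 0
      · -- witness value 1
        have hw : (⟨i, ⟨1, by omega⟩⟩ : (i : ι) × Fin (2 * k i)) ∈
            {w | w ∈ {u : (i : ι) × Fin (2 * k i) | 1 ≤ (u.2 : ℕ) ∧ (u.2 : ℕ) ≤ k u.1} ∧
              (CompleteJoinFamily fun i => Agraph (k i)).Adj ⟨i, a⟩ w} := by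
          refine ⟨⟨by simp, by simp; omega⟩, completeJoin_adj_same.2 (agraph_adj.2 ?_)⟩
          simp only [Fin.val_mk]
          omega
        rw [heq] at hw
        obtain ⟨-, hadj⟩ := hw
        rw [completeJoin_adj_same, agraph_adj] at hadj
        simp only [Fin.val_mk] at hadj
        omega
      · -- witness value b - k
        have hw : (⟨i, ⟨(b : ℕ) - k i, by omega⟩⟩ : (i : ι) × Fin (2 * k i)) ∈
            {w | w ∈ {u : (i : ι) × Fin (2 * k i) | 1 ≤ (u.2 : ℕ) ∧ (u.2 : ℕ) ≤ k u.1} ∧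
              (CompleteJoinFamily fun i => Agraph (k i)).Adj ⟨i, a⟩ w} := by
          refine ⟨⟨by simp; omega, by simp; omega⟩,
            completeJoin_adj_same.2 (agraph_adj.2 ?_)⟩
          simp only [Fin.val_mk]
          omega
        rw [heq] at hw
        obtain ⟨-, hadj⟩ := hw
        rw [completeJoin_adj_same, agraph_adj] at hadj
        simp only [Fin.val_mk] at hadj
        omega
    rintro ⟨i, a⟩ ha ⟨j, b⟩ hb hne
    have ha' : ¬(1 ≤ (a : ℕ) ∧ (a : ℕ) ≤ k i) := ha
    have hb' : ¬(1 ≤ (b : ℕ) ∧ (b : ℕ) ≤ k j) := hb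
    by_cases hij : i = j
    · subst hij
      have hab' : (a : ℕ) ≠ (b : ℕ) := fun h => hne (by rw [(Fin.ext h : a = b)])
      rcases hab'.lt_or_gt with h | h
      · exact same i a b h ha' hb'
      · exact (same i b a h hb' ha').symm
    · intro heq
      have hk2 := hk i; have hia := a.isLt
      by_cases h0 : (a : ℕ) = 0
      · have hw : (⟨i, ⟨k i, by omega⟩⟩ : (i : ι) × Fin (2 * k i)) ∈
            {w | w ∈ {u : (i : ι) × Fin (2 * k i) | 1 ≤ (u.2 : ℕ) ∧ (u.2 : ℕ) ≤ k u.1} ∧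
              (CompleteJoinFamily fun i => Agraph (k i)).Adj ⟨j, b⟩ w} :=
          ⟨⟨by simp; omega, by simp⟩,
            completeJoin_adj_ne (H := fun i => Agraph (k i)) (fun h => hij h.symm) b _⟩
        rw [← heq] at hw
        obtain ⟨-, hadj⟩ := hw
        rw [completeJoin_adj_same, agraph_adj] at hadj
        simp only [Fin.val_mk] at hadj
        omega
      · have hw : (⟨i, ⟨(a : ℕ) - k i, by omega⟩⟩ : (i : ι) × Fin (2 * k i)) ∈
            {w | w ∈ {u : (i : ι) × Fin (2 * k i) | 1 ≤ (u.2 : ℕ) ∧ (u.2 : ℕ) ≤ k u.1} ∧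
              (CompleteJoinFamily fun i => Agraph (k i)).Adj ⟨j, b⟩ w} :=
          ⟨⟨by simp; omega, by simp; omega⟩,
            completeJoin_adj_ne (H := fun i => Agraph (k i)) (fun h => hij h.symm) b _⟩
        rw [← heq] at hw
        obtain ⟨-, hadj⟩ := hw
        rw [completeJoin_adj_same, agraph_adj] at hadj
        simp only [Fin.val_mk] at hadj
        omega

lemma upper_card [Fintype ι] (k : ι → ℕ) (hk : ∀ i, 2 ≤ k i) :
    {u : (i : ι) × Fin (2 * k i) | 1 ≤ (u.2 : ℕ) ∧ (u.2 : ℕ) ≤ k u.1}.ncard = ∑ i, k i := by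
  classical
  have h1 : {u : (i : ι) × Fin (2 * k i) | 1 ≤ (u.2 : ℕ) ∧ (u.2 : ℕ) ≤ k u.1} =
      ↑(Finset.univ.filter fun u : (i : ι) × Fin (2 * k i) =>
        1 ≤ (u.2 : ℕ) ∧ (u.2 : ℕ) ≤ k u.1) := by
    ext u; simp
  rw [h1, Set.ncard_coe_finset]
  have h2 : (Finset.univ.filter fun u : (i : ι) × Fin (2 * k i) =>
        1 ≤ (u.2 : ℕ) ∧ (u.2 : ℕ) ≤ k u.1) =
      Finset.univ.sigma (fun i => Finset.univ.filter
        fun b : Fin (2 * k i) => 1 ≤ (b : ℕ) ∧ (b : ℕ) ≤ k i) := by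
    ext ⟨i, b⟩
    simp [Finset.mem_sigma]
  rw [h2, Finset.card_sigma]
  refine Finset.sum_congr rfl fun i _ => ?_
  have h3 : (Finset.univ.filter fun b : Fin (2 * k i) => 1 ≤ (b : ℕ) ∧ (b : ℕ) ≤ k i) =
      Finset.attachFin (Finset.Icc 1 (k i)) (fun m hm => by
        have := hk i; simp only [Finset.mem_Icc] at hm; omega) := by
    ext b
    simp [Finset.mem_attachFin, Finset.mem_Icc]
  rw [h3, Finset.card_attachFin, Nat.card_Icc]
  omega

end Upper

/-- Let `A` be a nonempty finite family of pairwise vertex-disjoint graphs, each member of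
which is isomorphic to `A_k` for some integer `k ≥ 2`, and let `G` be the complete join of
all members of `A`. Then `γ_L(G) = |V(G)|/2`. -/
theorem locDomNumber_completeJoinFamily_of_Agraphs {ι : Type*} [Fintype ι] [DecidableEq ι]
    [Nonempty ι] {V : ι → Type*} [∀ i, Fintype (V i)] (k : ι → ℕ) (hk : ∀ i, 2 ≤ k i)
    (H : ∀ i, SimpleGraph (V i)) (hiso : ∀ i, Nonempty (H i ≃g Agraph (k i))) :
    2 * locDomNumber (CompleteJoinFamily H) = Fintype.card (Σ i, V i) := by
  classical
  have e : ∀ i, H i ≃g Agraph (k i) := fun i => (hiso i).some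
  have hcard : Fintype.card (Σ i, V i) = Fintype.card ((i : ι) × Fin (2 * k i)) :=
    Fintype.card_congr (Equiv.sigmaCongrRight fun i => (e i).toEquiv)
  rw [locDomNumber_congr (joinIso e), hcard]
  have hcW : Fintype.card ((i : ι) × Fin (2 * k i)) = 2 * ∑ i, k i := by
    simp [Fintype.card_sigma, Finset.mul_sum]
  have hmem : (∑ i, k i) ∈ {n : ℕ | ∃ D : Set ((i : ι) × Fin (2 * k i)),
      IsLocatingDominatingSet (CompleteJoinFamily fun i => Agraph (k i)) D ∧ D.ncard = n} :=
    ⟨_, upperLD k hk, upper_card k hk⟩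
  have h1 : locDomNumber (CompleteJoinFamily fun i => Agraph (k i)) ≤ ∑ i, k i :=
    Nat.sInf_le hmem
  obtain ⟨Dm, hDm, hDcard⟩ := Nat.sInf_mem (⟨_, hmem⟩ : Set.Nonempty _)
  have h2 := lower k hk Dm hDm
  have h3 : locDomNumber (CompleteJoinFamily fun i => Agraph (k i)) = Dm.ncard :=
    hDcard.symm
  omega
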